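/- Fix ω = 3, ρ = 1/√5, ψ = arctan 2, and let λ ∈ ℂ with Re λ > 0. Set p = 2ω + λρ sin ψ and η = 1 − ω² + λρ cos ψ. Then every μ ∈ ℂ satisfying (μ² − η)² + p² = 0 (equivalently μ⁴ − 2η μ² + η² + p² = 0, the characteristic equation of the asymptotic linearized system on ℂ⁴) has Re μ ≠ 0. Consequently, since the roots of this quartic come in pairs ±μ, exactly two roots (counted with multiplicity) have positive real part and exactly two have negative real part; i.e., the system splits on {λ : Re λ > 0}. -/

import Mathlib

open Polynomial

lemma count_helper (x y : ℂ) (hx : x.re ≠ 0) (hy : y.re ≠ 0) :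
    Multiset.card (({x, -x, y, -y} : Multiset ℂ).filter (fun μ => 0 < μ.re)) = 2 ∧
    Multiset.card (({x, -x, y, -y} : Multiset ℂ).filter (fun μ => μ.re < 0)) = 2 := by
  rcases hx.lt_or_gt with h1 | h1 <;> rcases hy.lt_or_gt with h2 | h2 <;>
    constructor <;>
    simp [Multiset.insert_eq_cons, Multiset.filter_cons, Multiset.filter_singleton,
      Complex.neg_re, h1, h2, h1.not_gt, h2.not_gt, asymm h1, asymm h2, neg_pos,
      not_lt.2 h1.le, not_lt.2 h2.le, lt_asymm]


/-- For `ω = 3`, `ρ = 1/√5`, `ψ = arctan 2` and `Re λ > 0`, every spatial eigenvalue `μ` of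
the asymptotic linearized system on `ℂ⁴`, i.e. every root of `(μ² − η)² + p² = 0` with
`p = 2ω + λρ sin ψ` and `η = 1 − ω² + λρ cos ψ`, has nonzero real part; consequently exactly
two roots (with multiplicity) have positive real part and exactly two have negative real
part, so the system splits on `{λ : Re λ > 0}`. -/
theorem splitting_on_right_half_plane (lam : ℂ) (hlam : 0 < lam.re)
    (ω ρ ψ : ℝ) (hω : ω = 3) (hρ : ρ = 1 / Real.sqrt 5) (hψ : ψ = Real.arctan 2)
    (p η : ℂ) (hp : p = 2 * (ω : ℂ) + lam * (ρ : ℂ) * (Real.sin ψ : ℂ))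
    (hη : η = 1 - (ω : ℂ) ^ 2 + lam * (ρ : ℂ) * (Real.cos ψ : ℂ)) :
    (∀ μ : ℂ, (μ ^ 2 - η) ^ 2 + p ^ 2 = 0 → μ.re ≠ 0) ∧
    Multiset.card
        (((( X ^ 2 - C η) ^ 2 + C (p ^ 2) : Polynomial ℂ).roots).filter
          (fun μ => 0 < μ.re)) = 2 ∧
    Multiset.card
        (((( X ^ 2 - C η) ^ 2 + C (p ^ 2) : Polynomial ℂ).roots).filter
          (fun μ => μ.re < 0)) = 2 := by
  -- trig values
  have hsin : Real.sin ψ = 2 / Real.sqrt 5 := by rw [hψ, Real.sin_arctan]; norm_num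
  have hcos : Real.cos ψ = 1 / Real.sqrt 5 := by rw [hψ, Real.cos_arctan]; norm_num
  have hs5 : Real.sqrt 5 * Real.sqrt 5 = 5 := Real.mul_self_sqrt (by norm_num)
  have hs5pos : (0:ℝ) < Real.sqrt 5 := Real.sqrt_pos.2 (by norm_num)
  have hrs : ρ * Real.sin ψ = 2 / 5 := by rw [hρ, hsin]; field_simp; rw [Real.sq_sqrt (by norm_num)]
  have hrc : ρ * Real.cos ψ = 1 / 5 := by rw [hρ, hcos]; field_simp; rw [Real.sq_sqrt (by norm_num)]
  have hp' : p = 6 + lam * ((2:ℂ) / 5) := by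
    rw [hp, hω, mul_assoc, ← Complex.ofReal_mul, hrs]; push_cast; ring
  have hη' : η = -8 + lam * ((1:ℂ) / 5) := by
    rw [hη, hω, mul_assoc, ← Complex.ofReal_mul, hrc]; push_cast; ring
  -- Part 1
  have main : ∀ μ : ℂ, (μ ^ 2 - η) ^ 2 + p ^ 2 = 0 → μ.re ≠ 0 := by
    intro μ h hre0
    have hfac : (μ ^ 2 - η - Complex.I * p) * (μ ^ 2 - η + Complex.I * p) = 0 := by
      linear_combination h - p ^ 2 * Complex.I_sq
    rcases mul_eq_zero.1 hfac with h' | h'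
    · have heq : μ ^ 2 = η + Complex.I * p := by linear_combination h'
      rw [hη', hp', Complex.ext_iff] at heq
      simp [pow_two, Complex.mul_re, Complex.mul_im, Complex.add_re, Complex.add_im,
        Complex.div_re, Complex.div_im, hre0] at heq
      obtain ⟨h1, h2⟩ := heq
      nlinarith [sq_nonneg μ.im, hlam]
    · have heq : μ ^ 2 = η - Complex.I * p := by linear_combination h'
      rw [hη', hp', Complex.ext_iff] at heq
      simp [pow_two, Complex.mul_re, Complex.mul_im, Complex.add_re, Complex.add_im,
        Complex.div_re, Complex.div_im, hre0] at heq
      obtain ⟨h1, h2⟩ := heq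
      nlinarith [sq_nonneg μ.im, hlam]
  refine ⟨main, ?_⟩
  -- square roots
  obtain ⟨s₁, hs1⟩ := IsAlgClosed.exists_pow_nat_eq (η - Complex.I * p) (n := 2) (by norm_num)
  obtain ⟨s₂, hs2⟩ := IsAlgClosed.exists_pow_nat_eq (η + Complex.I * p) (n := 2) (by norm_num)
  have hroot1 : (s₁ ^ 2 - η) ^ 2 + p ^ 2 = 0 := by
    rw [hs1]; linear_combination p ^ 2 * Complex.I_sq
  have hroot2 : (s₂ ^ 2 - η) ^ 2 + p ^ 2 = 0 := by
    rw [hs2]; linear_combination p ^ 2 * Complex.I_sq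
  have hre1 := main s₁ hroot1
  have hre2 := main s₂ hroot2
  -- factorization
  have hCa : C (s₁ ^ 2) + C (s₂ ^ 2) = 2 * C η := by
    rw [hs1, hs2, ← map_add, show η - Complex.I * p + (η + Complex.I * p) = 2 * η by ring,
      map_mul, map_ofNat]
  have hCm : C (s₁ ^ 2) * C (s₂ ^ 2) = C η ^ 2 + C p ^ 2 := by
    rw [hs1, hs2, ← map_mul,
      show (η - Complex.I * p) * (η + Complex.I * p) = η ^ 2 + p ^ 2 by
        linear_combination -(p ^ 2) * Complex.I_sq,
      map_add, map_pow, map_pow]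
  have hfac : ((X ^ 2 - C η) ^ 2 + C (p ^ 2) : Polynomial ℂ)
      = (X - C s₁) * (X - C (-s₁)) * ((X - C s₂) * (X - C (-s₂))) := by
    have e1 : (X - C s₁) * (X - C (-s₁)) = X ^ 2 - C (s₁ ^ 2) := by
      rw [map_neg, map_pow]; ring
    have e2 : (X - C s₂) * (X - C (-s₂)) = X ^ 2 - C (s₂ ^ 2) := by
      rw [map_neg, map_pow]; ring
    rw [e1, e2, map_pow]
    linear_combination (X ^ 2 : Polynomial ℂ) * hCa - hCm
  have hroots : ((X ^ 2 - C η) ^ 2 + C (p ^ 2) : Polynomial ℂ).roots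
      = {s₁, -s₁, s₂, -s₂} := by
    rw [hfac, roots_mul (mul_ne_zero (mul_ne_zero (X_sub_C_ne_zero s₁) (X_sub_C_ne_zero (-s₁)))
        (mul_ne_zero (X_sub_C_ne_zero s₂) (X_sub_C_ne_zero (-s₂)))),
      roots_mul (mul_ne_zero (X_sub_C_ne_zero s₁) (X_sub_C_ne_zero (-s₁))),
      roots_mul (mul_ne_zero (X_sub_C_ne_zero s₂) (X_sub_C_ne_zero (-s₂))),
      roots_X_sub_C, roots_X_sub_C, roots_X_sub_C, roots_X_sub_C]
    rfl
  rw [hroots]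
  exact count_helper s₁ s₂ hre1 hre2
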